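/- Let K be a field, let V and W be finite-dimensional K-vector spaces, and let f : V →ₗ[K] W. Then (TensorProduct.map f LinearMap.id) ∘ₗ coevaluation K V = (TensorProduct.map LinearMap.id (LinearMap.dualMap f)) ∘ₗ coevaluation K W, as linear maps K →ₗ[K] W ⊗[K] Module.Dual K V. -/

import Mathlib

open TensorProduct

theorem stmt_14 (K : Type*) [Field K] {V W : Type*}
    [AddCommGroup V] [Module K V] [FiniteDimensional K V]
    [AddCommGroup W] [Module K W] [FiniteDimensional K W]
    (f : V →ₗ[K] W) :
    (TensorProduct.map f LinearMap.id) ∘ₗ coevaluation K V =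
      (TensorProduct.map LinearMap.id (LinearMap.dualMap f)) ∘ₗ coevaluation K W := by
  apply LinearMap.ext_ring
  simp only [LinearMap.comp_apply, coevaluation_apply_one, map_sum, TensorProduct.map_tmul,
    LinearMap.id_coe, id_eq]
  set bV := Module.Basis.ofVectorSpace K V
  set bW := Module.Basis.ofVectorSpace K W
  have hinj : Function.Injective
      ((dualTensorHom K V W) ∘ₗ (TensorProduct.comm K W (Module.Dual K V)).toLinearMap) := by
    have h1 : Function.Injective (dualTensorHom K V W) :=
      (dualTensorHomEquiv K V W).injective
    exact h1.comp (TensorProduct.comm K W (Module.Dual K V)).injective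
  apply hinj
  simp only [map_sum, LinearMap.comp_apply, LinearEquiv.coe_coe, TensorProduct.comm_tmul,
    dualTensorHom_apply]
  ext v
  simp only [LinearMap.coe_sum, Finset.sum_apply, LinearMap.smul_apply,
    LinearMap.dualMap_apply]
  calc ∑ i, bV.coord i v • f (bV i)
      = f (∑ i, bV.coord i v • bV i) := by rw [map_sum]; simp
    _ = f v := by simp only [Module.Basis.coord_apply]; rw [bV.sum_repr v]
    _ = ∑ j, bW.coord j (f v) • bW j := by simp only [Module.Basis.coord_apply]; rw [bW.sum_repr (f v)]
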